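/- Let W_o be the set of m×m real matrices of the form X = [[0, B],[Bᵀ, C]] with B ∈ Mat(k×2n,ℝ) and C ∈ Mat(2n×2n,ℝ) satisfying Cᵀ = −C and C·J + J·C = 0 (these are exactly the elements of the Lie algebra o(k,2n,ℝ) lying in the sum of the (−1)-eigenspaces of σ and σ²). Then for every nonzero X ∈ W_o one has Tr(ρ·(X·(Ĵ⁻X) − (Ĵ⁻X)·X)) > 0; i.e. the metric g⁻(X,Y) = ω(X, j⁻Y) associated to j⁻ is positive definite, so (ω, j⁻) is an almost Kähler structure on SO₀(k,2n,ℝ)/(SO(k,ℝ)×U(n)). -/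
import Mathlib


open Matrix

/-- The standard complex structure matrix `J = [[0, -Id_n],[Id_n, 0]]`. -/
noncomputable def Jmat (n : ℕ) : Matrix (Fin n ⊕ Fin n) (Fin n ⊕ Fin n) ℝ :=
  Matrix.fromBlocks 0 (-1) 1 0

/-- The matrix `ρ = [[0,0],[0,J]]` with block sizes `k` and `2n`. -/
noncomputable def rhoMat (k n : ℕ) :
    Matrix (Fin k ⊕ (Fin n ⊕ Fin n)) (Fin k ⊕ (Fin n ⊕ Fin n)) ℝ :=
  Matrix.fromBlocks 0 0 0 (Jmat n)

/-- The map `Ĵ⁻ : [[A,B],[B',C]] ↦ [[0, −B·J],[J·B', −(J·C − C·J)/2]]`. -/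
noncomputable def JhatMinus (k n : ℕ)
    (X : Matrix (Fin k ⊕ (Fin n ⊕ Fin n)) (Fin k ⊕ (Fin n ⊕ Fin n)) ℝ) :
    Matrix (Fin k ⊕ (Fin n ⊕ Fin n)) (Fin k ⊕ (Fin n ⊕ Fin n)) ℝ :=
  Matrix.fromBlocks 0 (-(X.toBlocks₁₂ * Jmat n)) (Jmat n * X.toBlocks₂₁)
    (-((1 / 2 : ℝ) • (Jmat n * X.toBlocks₂₂ - X.toBlocks₂₂ * Jmat n)))

/-- `W_o` : the part of `o(k,2n,ℝ)` lying in the sum of the `(−1)`-eigenspaces of `σ`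
and `σ²`, i.e. matrices `[[0,B],[Bᵀ,C]]` with `Cᵀ = −C` and `C·J + J·C = 0`. -/
def Wo (k n : ℕ) : Set (Matrix (Fin k ⊕ (Fin n ⊕ Fin n)) (Fin k ⊕ (Fin n ⊕ Fin n)) ℝ) :=
  {X | ∃ (B : Matrix (Fin k) (Fin n ⊕ Fin n) ℝ)
    (C : Matrix (Fin n ⊕ Fin n) (Fin n ⊕ Fin n) ℝ),
    C.transpose = -C ∧ C * Jmat n + Jmat n * C = 0 ∧
    X = Matrix.fromBlocks 0 B B.transpose C}

lemma JJ (n : ℕ) : Jmat n * Jmat n = -1 := by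
  rw [show (-1 : Matrix _ _ ℝ) = Matrix.fromBlocks (-1) 0 0 (-1) by
    rw [← Matrix.fromBlocks_one, Matrix.fromBlocks_neg]; simp]
  simp [Jmat, Matrix.fromBlocks_multiply]

lemma tr_pos {p q : Type*} [Fintype p] [Fintype q] (M : Matrix p q ℝ) (h : M ≠ 0) :
    0 < (Mᵀ * M).trace := by
  have hM : ∃ i j, M i j ≠ 0 := by
    by_contra hc; push_neg at hc; exact h (by ext i j; simp [hc])
  obtain ⟨i0, j0, h0⟩ := hM
  rw [Matrix.trace]
  refine Finset.sum_pos' (fun j _ => Finset.sum_nonneg fun i _ => ?_) ⟨j0, Finset.mem_univ _, ?_⟩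
  · simp only [Matrix.transpose_apply]; exact mul_self_nonneg _
  · simp only [Matrix.diag, Matrix.mul_apply, Matrix.transpose_apply]
    exact Finset.sum_pos' (fun i _ => mul_self_nonneg _) ⟨i0, Finset.mem_univ _,
      mul_self_pos.mpr h0⟩

lemma tr_nonneg {p q : Type*} [Fintype p] [Fintype q] (M : Matrix p q ℝ) :
    0 ≤ (Mᵀ * M).trace := by
  rw [Matrix.trace]
  refine Finset.sum_nonneg fun j _ => Finset.sum_nonneg fun i _ => ?_
  simp only [Matrix.transpose_apply]; exact mul_self_nonneg _

lemma trace_fromBlocks' {p q : Type*} [Fintype p] [Fintype q]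
    (A : Matrix p p ℝ) (B : Matrix p q ℝ) (C : Matrix q p ℝ) (D : Matrix q q ℝ) :
    (Matrix.fromBlocks A B C D).trace = A.trace + D.trace := by
  simp [Matrix.trace, Fintype.sum_sum_type, Matrix.fromBlocks, Matrix.diag]

theorem gMinus_positive_definite_so_k_2n (k n : ℕ) (hk : 0 < k) (hn : 0 < n)
    (X : Matrix (Fin k ⊕ (Fin n ⊕ Fin n)) (Fin k ⊕ (Fin n ⊕ Fin n)) ℝ)
    (hX : X ∈ Wo k n) (hX0 : X ≠ 0) :
    0 < Matrix.trace (rhoMat k n * (X * JhatMinus k n X - JhatMinus k n X * X)) := by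
  obtain ⟨B, C, hCt, hCJ, rfl⟩ := hX
  set J := Jmat n with hJdef
  have hJJ : J * J = -1 := JJ n
  have hJC : J * C = -(C * J) := eq_neg_of_add_eq_zero_right hCJ
  have hCJ' : C * J = -(J * C) := eq_neg_of_add_eq_zero_left hCJ
  have hC' : C = -Cᵀ := by rw [hCt, neg_neg]
  have hE : JhatMinus k n (Matrix.fromBlocks 0 B Bᵀ C) =
      Matrix.fromBlocks 0 (-(B * J)) (J * Bᵀ) (-(J * C)) := by
    rw [JhatMinus]
    simp only [Matrix.toBlocks_fromBlocks₁₂, Matrix.toBlocks_fromBlocks₂₁,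
      Matrix.toBlocks_fromBlocks₂₂]
    have h2 : -((1/2:ℝ) • (J * C - C * J)) = -(J * C) := by
      rw [hCJ', sub_neg_eq_add]
      ext i j
      simp only [Matrix.neg_apply, Matrix.smul_apply, Matrix.add_apply, smul_eq_mul]
      ring
    rw [h2]
  rw [hE, rhoMat]
  rw [Matrix.fromBlocks_multiply, Matrix.fromBlocks_multiply]
  rw [show ∀ (A₁ B₁ C₁ D₁ A₂ B₂ C₂ D₂ : _),
      (Matrix.fromBlocks A₁ B₁ C₁ D₁ - Matrix.fromBlocks A₂ B₂ C₂ D₂ :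
        Matrix (Fin k ⊕ (Fin n ⊕ Fin n)) (Fin k ⊕ (Fin n ⊕ Fin n)) ℝ) =
      Matrix.fromBlocks (A₁ - A₂) (B₁ - B₂) (C₁ - C₂) (D₁ - D₂) from ?_]
  · rw [Matrix.fromBlocks_multiply, trace_fromBlocks']
    simp only [Matrix.zero_mul, Matrix.mul_zero, zero_add, add_zero, zero_sub, sub_zero,
      Matrix.neg_mul, Matrix.mul_neg, neg_neg, Matrix.trace_zero, Matrix.trace_neg,
      Matrix.mul_add, Matrix.mul_sub, Matrix.trace_add, Matrix.trace_sub, ← Matrix.mul_assoc,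
      ← hJdef]
    have t1 : (J * Bᵀ * B * J).trace = -((Bᵀ * B).trace) := by
      rw [Matrix.trace_mul_comm, ← Matrix.mul_assoc, ← Matrix.mul_assoc, hJJ,
        Matrix.neg_mul, Matrix.one_mul, Matrix.neg_mul, Matrix.trace_neg]
    have t2 : J * C * J * C = C * C := by
      rw [Matrix.mul_assoc J C J, hCJ', Matrix.mul_neg, ← Matrix.mul_assoc, hJJ]
      simp
    have t3 : (C * C).trace = -((Cᵀ * C).trace) := by
      nth_rewrite 1 [hC']
      rw [Matrix.neg_mul, Matrix.trace_neg]
    have t4 : J * J * Bᵀ * B = -(Bᵀ * B) := by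
      rw [hJJ, Matrix.neg_mul, Matrix.one_mul, Matrix.neg_mul]
    have t5 : J * J * C * C = -(C * C) := by
      rw [hJJ, Matrix.neg_mul, Matrix.one_mul, Matrix.neg_mul]
    rw [t1, t2, t4, t5, Matrix.trace_neg, Matrix.trace_neg, t3]
    have hBC : B ≠ 0 ∨ C ≠ 0 := by
      by_contra hc
      push_neg at hc
      obtain ⟨hB, hC⟩ := hc
      subst hB; subst hC
      simp at hX0
    have hbn := tr_nonneg B
    have hcn := tr_nonneg C
    rcases hBC with hB | hC
    · have := tr_pos B hB; linarith
    · have := tr_pos C hC; linarith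
  · intro A₁ B₁ C₁ D₁ A₂ B₂ C₂ D₂
    ext i j
    cases i <;> cases j <;> simp [Matrix.fromBlocks]
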